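/- Let 1 ≤ q ≤ p < ∞ with conjugate exponent r of q, E a real Banach space, h ∈ L^p(I,E), and let the kernel k : I×I → 𝓛(E) satisfy (κ1)–(κ3). Then the Hammerstein integral operator K : L^q(I,E) → L^p(I,E), K(w)(t) := h(t) + ∫₀ᵀ k(t,s)w(s) ds, is well defined and satisfies ‖K(w₁) − K(w₂)‖_{L^p} ≤ ‖t ↦ ‖k(t,·)‖_{L^r}‖_{L^p}·‖w₁ − w₂‖_{L^q} for all w₁, w₂ ∈ L^q(I,E). -/

import Mathlib

open MeasureTheory Filter Topology Set
open scoped ENNReal NNReal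

noncomputable section

/-- The Lebesgue measure restricted to the interval `I = [0, T]`. -/
abbrev μI (T : ℝ) : MeasureTheory.Measure ℝ := MeasureTheory.volume.restrict (Set.Icc 0 T)

/-- The weak topology on a real normed space, i.e. the topology induced by all continuous
linear functionals. -/
def weakTop (X : Type*) [NormedAddCommGroup X] [NormedSpace ℝ X] : TopologicalSpace X :=
  TopologicalSpace.induced (fun (x : X) (φ : X →L[ℝ] ℝ) => φ x) Pi.topologicalSpace

/-- Weak convergence of a sequence in a real normed space. -/
def WeakConv {X : Type*} [NormedAddCommGroup X] [NormedSpace ℝ X] (w : ℕ → X) (x : X) : Prop :=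
  ∀ φ : X →L[ℝ] ℝ, Tendsto (fun n => φ (w n)) atTop (𝓝 (φ x))

variable {E : Type*} [NormedAddCommGroup E] [NormedSpace ℝ E]
/-- The norm `‖ t ↦ ‖k(t,·)‖_{L^r} ‖_{L^p}` of a kernel `k : I × I → 𝓛(E)`. -/
def kNorm (T : ℝ) (k : ℝ → ℝ → E →L[ℝ] E) (p r : ℝ≥0∞) : ℝ :=
  (eLpNorm (fun t => (eLpNorm (k t) r (μI T)).toReal) p (μI T)).toReal

/-- Kernel conditions (κ1)–(κ3): `k` is strongly measurable on the product, `k(t,·) ∈ L^r` for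
every `t ∈ I`, and `t ↦ ‖k(t,·)‖_{L^r}` belongs to `L^p`. -/
def CondK (T : ℝ) (k : ℝ → ℝ → E →L[ℝ] E) (p r : ℝ≥0∞) : Prop :=
  AEStronglyMeasurable (Function.uncurry k) ((μI T).prod (μI T)) ∧
  (∀ t ∈ Set.Icc (0:ℝ) T, MemLp (k t) r (μI T)) ∧
  MemLp (fun t => (eLpNorm (k t) r (μI T)).toReal) p (μI T)

/-- The Hausdorff measure of noncompactness of `Ω` relative to `E₀`:
the infimum of all `ε > 0` such that `Ω` admits a finite cover by open balls of radius `ε`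
centered in `E₀`. -/
def relMNC (E₀ Ω : Set E) : ℝ :=
  sInf {ε : ℝ | 0 < ε ∧ ∃ s : Finset E, ↑s ⊆ E₀ ∧ Ω ⊆ ⋃ x ∈ s, Metric.ball x ε}
section Aux

variable [CompleteSpace E]

omit [CompleteSpace E] in
/-- Hölder: the integrand `s ↦ k t s (u s)` is in `L¹`, with norm controlled. -/
lemma aux_eLpNorm_one_le {T : ℝ} {q r : ℝ≥0∞} (hr : q⁻¹ + r⁻¹ = 1)
    {k : ℝ → ℝ → E →L[ℝ] E} {t : ℝ} (hkt : MemLp (k t) r (μI T))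
    {u : ℝ → E} (hu : MemLp u q (μI T)) :
    eLpNorm (fun s => (k t s) (u s)) 1 (μI T) ≤
      eLpNorm (k t) r (μI T) * eLpNorm u q (μI T) := by
  have hH : ENNReal.HolderTriple r q 1 := ⟨by rw [inv_one, add_comm]; exact hr⟩
  have := eLpNorm_le_eLpNorm_mul_eLpNorm'_of_norm (p := r) (q := q) (r := 1) hkt.aestronglyMeasurable
    hu.aestronglyMeasurable (fun A x => A x) 1
    (Filter.Eventually.of_forall fun s => by
      rw [NNReal.coe_one, one_mul]; exact (k t s).le_opNorm (u s))
  rwa [ENNReal.coe_one, one_mul] at this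

lemma aux_integrable {T : ℝ} {q r : ℝ≥0∞} (hr : q⁻¹ + r⁻¹ = 1)
    {k : ℝ → ℝ → E →L[ℝ] E} {t : ℝ} (hkt : MemLp (k t) r (μI T))
    {u : ℝ → E} (hu : MemLp u q (μI T)) :
    Integrable (fun s => (k t s) (u s)) (μI T) := by
  rw [← memLp_one_iff_integrable]
  refine ⟨(isBoundedBilinearMap_apply (𝕜 := ℝ) (E := E)
      (F := E)).continuous.comp_aestronglyMeasurable
      (hkt.aestronglyMeasurable.prodMk hu.aestronglyMeasurable), ?_⟩
  exact lt_of_le_of_lt (aux_eLpNorm_one_le hr hkt hu)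
    (ENNReal.mul_lt_top hkt.eLpNorm_lt_top hu.eLpNorm_lt_top)

lemma aux_norm_integral_le {T : ℝ} {q r : ℝ≥0∞} (hr : q⁻¹ + r⁻¹ = 1)
    {k : ℝ → ℝ → E →L[ℝ] E} {t : ℝ} (hkt : MemLp (k t) r (μI T))
    {u : ℝ → E} (hu : MemLp u q (μI T)) :
    ‖∫ s, (k t s) (u s) ∂(μI T)‖ ≤
      (eLpNorm (k t) r (μI T)).toReal * (eLpNorm u q (μI T)).toReal := by
  have h1 : (‖∫ s, (k t s) (u s) ∂(μI T)‖₊ : ℝ≥0∞) ≤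
      eLpNorm (fun s => (k t s) (u s)) 1 (μI T) := by
    rw [eLpNorm_one_eq_lintegral_enorm]
    exact enorm_integral_le_lintegral_enorm _
  have h2 := h1.trans (aux_eLpNorm_one_le hr hkt hu)
  have hfin : eLpNorm (k t) r (μI T) * eLpNorm u q (μI T) ≠ ∞ :=
    (ENNReal.mul_lt_top hkt.eLpNorm_lt_top hu.eLpNorm_lt_top).ne
  have := ENNReal.toReal_mono hfin h2
  rwa [ENNReal.coe_toReal, coe_nnnorm, ENNReal.toReal_mul] at this

omit [CompleteSpace E] in
/-- a.e. measurability of the Hammerstein integral. -/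
lemma aux_aesm {T : ℝ} {p r : ℝ≥0∞} {k : ℝ → ℝ → E →L[ℝ] E}
    (hk : CondK T k p r) {u : ℝ → E} (hu : AEStronglyMeasurable u (μI T)) :
    AEStronglyMeasurable (fun t => ∫ s, (k t s) (u s) ∂(μI T)) (μI T) := by
  have hprod : AEStronglyMeasurable (fun z : ℝ × ℝ => (k z.1 z.2) (u z.2))
      ((μI T).prod (μI T)) :=
    (isBoundedBilinearMap_apply (𝕜 := ℝ) (E := E)
      (F := E)).continuous.comp_aestronglyMeasurable (hk.1.prodMk hu.comp_snd)
  exact hprod.integral_prod_right'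

/-- The main quantitative bound. -/
lemma aux_eLpNorm_le {T : ℝ} {p q r : ℝ≥0∞} (hr : q⁻¹ + r⁻¹ = 1)
    {k : ℝ → ℝ → E →L[ℝ] E} (hk : CondK T k p r)
    {u : ℝ → E} (hu : MemLp u q (μI T)) :
    eLpNorm (fun t => ∫ s, (k t s) (u s) ∂(μI T)) p (μI T) ≤
      eLpNorm (fun t => (eLpNorm (k t) r (μI T)).toReal) p (μI T) *
        ENNReal.ofReal (eLpNorm u q (μI T)).toReal := by
  set C : ℝ := (eLpNorm u q (μI T)).toReal with hC
  have hC0 : 0 ≤ C := ENNReal.toReal_nonneg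
  have hbound : ∀ᵐ t ∂(μI T), ‖∫ s, (k t s) (u s) ∂(μI T)‖ ≤
      ‖(eLpNorm (k t) r (μI T)).toReal * C‖ := by
    filter_upwards [ae_restrict_mem measurableSet_Icc] with t ht
    exact (aux_norm_integral_le hr (hk.2.1 t ht) hu).trans (le_abs_self _)
  calc eLpNorm (fun t => ∫ s, (k t s) (u s) ∂(μI T)) p (μI T)
      ≤ eLpNorm (fun t => (eLpNorm (k t) r (μI T)).toReal * C) p (μI T) :=
        eLpNorm_mono_ae hbound
    _ = eLpNorm (fun t => C • (eLpNorm (k t) r (μI T)).toReal) p (μI T) := by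
        simp [smul_eq_mul, mul_comm]
    _ = (‖C‖₊ : ℝ≥0∞) * eLpNorm (fun t => (eLpNorm (k t) r (μI T)).toReal) p (μI T) :=
        eLpNorm_const_smul C _ p (μI T)
    _ = eLpNorm (fun t => (eLpNorm (k t) r (μI T)).toReal) p (μI T) *
          ENNReal.ofReal C := by
        rw [mul_comm, ← Real.enorm_eq_ofReal hC0]; rfl

end Aux

/-- the Hammerstein integral operator
`K(w)(t) = h(t) + ∫₀ᵀ k(t,s) w(s) ds` is a well-defined map `L^q(I,E) → L^p(I,E)` and is
Lipschitz with constant `‖t ↦ ‖k(t,·)‖_{L^r}‖_{L^p}`. -/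
theorem statement16 [CompleteSpace E]
    (T : ℝ) (hT : 0 < T) (p q r : ℝ≥0∞) [Fact (1 ≤ p)] [Fact (1 ≤ q)]
    (hp : p ≠ ∞) (hq : q ≠ ∞) (hqp : q ≤ p) (hr : q⁻¹ + r⁻¹ = 1)
    (k : ℝ → ℝ → E →L[ℝ] E) (hk : CondK T k p r)
    (h : Lp E p (μI T)) :
    (∀ w : Lp E q (μI T),
      MemLp (fun t => h t + ∫ s, (k t s) (w s) ∂(μI T)) p (μI T)) ∧
    (∀ w₁ w₂ : Lp E q (μI T),
      eLpNorm (fun t => (h t + ∫ s, (k t s) (w₁ s) ∂(μI T)) -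
          (h t + ∫ s, (k t s) (w₂ s) ∂(μI T))) p (μI T) ≤
        ENNReal.ofReal (kNorm T k p r * ‖w₁ - w₂‖)) := by
  have hwd : ∀ w : Lp E q (μI T),
      MemLp (fun t => h t + ∫ s, (k t s) (w s) ∂(μI T)) p (μI T) := by
    intro w
    refine (Lp.memLp h).add ⟨aux_aesm hk (Lp.memLp w).aestronglyMeasurable, ?_⟩
    refine lt_of_le_of_lt (aux_eLpNorm_le hr hk (Lp.memLp w)) ?_
    exact ENNReal.mul_lt_top hk.2.2.eLpNorm_lt_top ENNReal.ofReal_lt_top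
  refine ⟨hwd, fun w₁ w₂ => ?_⟩
  have hdiff : ∀ᵐ t ∂(μI T),
      (h t + ∫ s, (k t s) (w₁ s) ∂(μI T)) - (h t + ∫ s, (k t s) (w₂ s) ∂(μI T)) =
        ∫ s, (k t s) ((w₁ - w₂ : Lp E q (μI T)) s) ∂(μI T) := by
    filter_upwards [ae_restrict_mem measurableSet_Icc] with t ht
    have hkt := hk.2.1 t ht
    have h₁ := aux_integrable hr hkt (Lp.memLp w₁)
    have h₂ := aux_integrable hr hkt (Lp.memLp w₂)
    have : ∫ s, (k t s) ((w₁ - w₂ : Lp E q (μI T)) s) ∂(μI T) =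
        ∫ s, ((k t s) (w₁ s) - (k t s) (w₂ s)) ∂(μI T) := by
      refine integral_congr_ae ?_
      filter_upwards [Lp.coeFn_sub w₁ w₂] with s hs
      rw [hs, Pi.sub_apply, map_sub]
    rw [this, integral_sub h₁ h₂]
    abel
  rw [eLpNorm_congr_ae hdiff]
  have hle := aux_eLpNorm_le hr hk (Lp.memLp (w₁ - w₂))
  refine hle.trans (le_of_eq ?_)
  rw [kNorm, ENNReal.ofReal_mul ENNReal.toReal_nonneg,
    ENNReal.ofReal_toReal hk.2.2.eLpNorm_lt_top.ne, Lp.norm_def]
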